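/- Let $\{f_m, \mathcal{F}_m\}_{m=0}^\infty$ be a nonnegative super-martingale relative to a set of equivalent measures $M$. Then $f$ is local regular if and only if there exist $\mathcal{F}_m$-measurable nonnegative random variables $\xi^0_m$ with $E^P\{\xi^0_m \mid \mathcal{F}_{m-1}\} = 1$ for all $P \in M$ and $\frac{f_m}{f_{m-1}} \le \xi^0_m$ for all $m \ge 1$ (assuming $f_m \ge a > 0$ for some constant $a$, or after shifting by a positive constant). -/

import Mathlib

open MeasureTheory Filter

lemma mul_cond_one {Ω : Type*} {m0 : MeasurableSpace Ω} {μ : Measure Ω} [IsProbabilityMeasure μ]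
    {𝔪 : MeasurableSpace Ω} (hm : 𝔪 ≤ m0) {φ ξ : Ω → ℝ}
    (hφ : StronglyMeasurable[𝔪] φ) (hφ0 : ∀ ω, 0 ≤ φ ω) (hφint : Integrable φ μ)
    (hξ0 : ∀ ω, 0 ≤ ξ ω) (hξint : Integrable ξ μ)
    (hcond : μ[ξ|𝔪] =ᵐ[μ] fun _ => (1 : ℝ)) :
    Integrable (fun ω => φ ω * ξ ω) μ ∧ ∫ ω, φ ω * ξ ω ∂μ = ∫ ω, φ ω ∂μ := by
  have hφm0 : StronglyMeasurable[m0] φ := hφ.mono hm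
  set φn : ℕ → Ω → ℝ := fun n ω => min (φ ω) n with hφndef
  have hφn_meas : ∀ n, StronglyMeasurable[𝔪] (φn n) := fun n =>
    (hφ.measurable.min measurable_const).stronglyMeasurable
  have hφn_nn : ∀ n ω, 0 ≤ φn n ω := fun n ω => le_min (hφ0 ω) (Nat.cast_nonneg n)
  have hφn_le : ∀ n ω, φn n ω ≤ φ ω := fun n ω => min_le_left _ _
  have hφn_int : ∀ n : ℕ, Integrable (fun ω => φn n ω * ξ ω) μ := fun n =>
    hξint.bdd_mul ((hφn_meas n).mono hm).aestronglyMeasurable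
      (c := n) (Eventually.of_forall fun ω => by
        rw [Real.norm_eq_abs, abs_of_nonneg (hφn_nn n ω)]
        exact min_le_right _ _)
  have hφn_int0 : ∀ n : ℕ, Integrable (φn n) μ := fun n =>
    hφint.mono ((hφn_meas n).mono hm).aestronglyMeasurable
      (Eventually.of_forall fun ω => by
        rw [Real.norm_eq_abs, Real.norm_eq_abs, abs_of_nonneg (hφn_nn n ω)]
        exact (hφn_le n ω).trans (le_abs_self _))
  have hint_n : ∀ n : ℕ, ∫ ω, φn n ω * ξ ω ∂μ ≤ ∫ ω, φ ω ∂μ := by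
    intro n
    have hce : μ[fun ω => φn n ω * ξ ω|𝔪] =ᵐ[μ] φn n := by
      refine (condExp_mul_of_stronglyMeasurable_left (μ := μ) (hφn_meas n) (hφn_int n) hξint).trans ?_
      filter_upwards [hcond] with ω hω
      simp only [Pi.mul_apply, hω]
      simp
    calc ∫ ω, φn n ω * ξ ω ∂μ = ∫ ω, (μ[fun ω => φn n ω * ξ ω|𝔪]) ω ∂μ :=
          (integral_condExp hm).symm
      _ = ∫ ω, φn n ω ∂μ := integral_congr_ae hce
      _ ≤ ∫ ω, φ ω ∂μ := integral_mono (hφn_int0 n) hφint (fun ω => hφn_le n ω)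
  have hξm : AEMeasurable ξ μ := hξint.1.aemeasurable
  have hsup : ∀ ω, (⨆ n : ℕ, ENNReal.ofReal (φn n ω * ξ ω)) = ENNReal.ofReal (φ ω * ξ ω) := by
    intro ω
    apply le_antisymm
    · exact iSup_le fun n => ENNReal.ofReal_le_ofReal
        (mul_le_mul_of_nonneg_right (hφn_le n ω) (hξ0 ω))
    · have h : φn ⌈φ ω⌉₊ ω = φ ω := min_eq_left (Nat.le_ceil _)
      calc ENNReal.ofReal (φ ω * ξ ω) = ENNReal.ofReal (φn ⌈φ ω⌉₊ ω * ξ ω) := by rw [h]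
        _ ≤ ⨆ n : ℕ, ENNReal.ofReal (φn n ω * ξ ω) := le_iSup (fun n : ℕ => ENNReal.ofReal (φn n ω * ξ ω)) ⌈φ ω⌉₊
  have hlin : ∫⁻ ω, ENNReal.ofReal (φ ω * ξ ω) ∂μ ≤ ENNReal.ofReal (∫ ω, φ ω ∂μ) := by
    have hmeas : ∀ n : ℕ, AEMeasurable (fun ω => ENNReal.ofReal (φn n ω * ξ ω)) μ := fun n =>
      ENNReal.measurable_ofReal.comp_aemeasurable
        (((hφn_meas n).mono hm).measurable.aemeasurable.mul hξm)
    have hmono : ∀ᵐ ω ∂μ, Monotone fun n : ℕ => ENNReal.ofReal (φn n ω * ξ ω) :=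
      Eventually.of_forall fun ω i j hij => ENNReal.ofReal_le_ofReal
        (mul_le_mul_of_nonneg_right (min_le_min le_rfl (Nat.cast_le.2 hij)) (hξ0 ω))
    calc ∫⁻ ω, ENNReal.ofReal (φ ω * ξ ω) ∂μ
        = ∫⁻ ω, ⨆ n : ℕ, ENNReal.ofReal (φn n ω * ξ ω) ∂μ :=
          lintegral_congr fun ω => (hsup ω).symm
      _ = ⨆ n : ℕ, ∫⁻ ω, ENNReal.ofReal (φn n ω * ξ ω) ∂μ := lintegral_iSup' hmeas hmono
      _ ≤ ENNReal.ofReal (∫ ω, φ ω ∂μ) := by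
          refine iSup_le fun n => ?_
          rw [← ofReal_integral_eq_lintegral_ofReal (hφn_int n)
            (Eventually.of_forall fun ω => mul_nonneg (hφn_nn n ω) (hξ0 ω))]
          exact ENNReal.ofReal_le_ofReal (hint_n n)
  have hintmul : Integrable (fun ω => φ ω * ξ ω) μ := by
    refine ⟨by exact hφm0.aestronglyMeasurable.mul hξint.1, ?_⟩
    rw [hasFiniteIntegral_iff_ofReal
      (Eventually.of_forall fun ω => mul_nonneg (hφ0 ω) (hξ0 ω))]
    exact lt_of_le_of_lt hlin ENNReal.ofReal_lt_top
  refine ⟨hintmul, ?_⟩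
  have hce : μ[fun ω => φ ω * ξ ω|𝔪] =ᵐ[μ] φ := by
    refine (condExp_mul_of_stronglyMeasurable_left (μ := μ) hφ hintmul hξint).trans ?_
    filter_upwards [hcond] with ω hω
    simp only [Pi.mul_apply, hω]
    simp
  calc ∫ ω, φ ω * ξ ω ∂μ = ∫ ω, (μ[fun ω => φ ω * ξ ω|𝔪]) ω ∂μ :=
        (integral_condExp hm).symm
    _ = ∫ ω, φ ω ∂μ := integral_congr_ae hce

theorem stmt10 {Ω : Type*} {m0 : MeasurableSpace Ω} (ℱ : Filtration ℕ m0)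
    (M : Set (Measure Ω)) (hne : M.Nonempty)
    (hprob : ∀ P ∈ M, IsProbabilityMeasure P)
    (hequiv : ∀ P ∈ M, ∀ Q ∈ M, P ≪ Q)
    (f : ℕ → Ω → ℝ)
    (a : ℝ) (ha : 0 < a) (hfa : ∀ m ω, a ≤ f m ω)
    (hsm : ∀ P ∈ M, Supermartingale f ℱ P)
    (hbdd : ∀ m, ∃ C : ℝ, ∀ P ∈ M, ∫ ω, |f m ω| ∂P ≤ C) :
    (∃ g : ℕ → Ω → ℝ,
        Adapted ℱ g ∧ (∀ m ω, 0 ≤ g m ω) ∧ (∀ ω, g 0 ω = 0) ∧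
        (∀ m ω, g m ω ≤ g (m + 1) ω) ∧
        (∀ m, ∃ C : ℝ, ∀ P ∈ M, ∫ ω, g m ω ∂P ≤ C) ∧
        (∀ P ∈ M, Martingale (fun m ω => f m ω + g m ω) ℱ P))
    ↔
    (∃ ξ0 : ℕ → Ω → ℝ,
        (∀ m, StronglyMeasurable[ℱ m] (ξ0 m)) ∧
        (∀ m ω, 0 ≤ ξ0 m ω) ∧
        (∀ P ∈ M, ∀ m : ℕ, Integrable (ξ0 (m + 1)) P ∧
          P[ξ0 (m + 1) | ℱ m] =ᵐ[P] fun _ => (1 : ℝ)) ∧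
        (∀ P ∈ M, ∀ m : ℕ,
          (fun ω => f (m + 1) ω / f m ω) ≤ᵐ[P] ξ0 (m + 1))) := by
  obtain ⟨P0, hP0⟩ := hne
  have hfadp : StronglyAdapted ℱ f := (hsm P0 hP0).stronglyAdapted
  have hfpos : ∀ m ω, 0 < f m ω := fun m ω => lt_of_lt_of_le ha (hfa m ω)
  constructor
  · rintro ⟨g, hgadp, hg0, hgz, hgmono, _hgbdd, hgmart⟩
    refine ⟨fun m => match m with
      | 0 => fun _ => (1 : ℝ)
      | (m + 1) => fun ω => (f (m + 1) ω + g (m + 1) ω - g m ω) / f m ω, ?_, ?_, ?_, ?_⟩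
    · intro m
      match m with
      | 0 => exact stronglyMeasurable_const
      | (m + 1) =>
        exact ((((hfadp (m + 1)).measurable.add (hgadp (m + 1))).sub
          ((hgadp m).mono (ℱ.mono (Nat.le_succ m)) le_rfl)).div
          ((hfadp m).measurable.mono (ℱ.mono (Nat.le_succ m)) le_rfl)).stronglyMeasurable
    · intro m ω
      match m with
      | 0 => exact zero_le_one
      | (m + 1) =>
        have h1 : (0 : ℝ) ≤ f (m + 1) ω + g (m + 1) ω - g m ω := by
          have := hfa (m + 1) ω; have := hgmono m ω; linarith
        exact div_nonneg h1 (hfpos m ω).le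
    · intro P hP m
      haveI := hprob P hP
      have hfint : ∀ k, Integrable (f k) P := fun k => (hsm P hP).integrable k
      have hfgint : ∀ k, Integrable (fun ω => f k ω + g k ω) P := fun k =>
        (hgmart P hP).integrable k
      have hgint : ∀ k, Integrable (g k) P := fun k => by
        have h := (hfgint k).sub (hfint k)
        exact h.congr (Eventually.of_forall fun ω => by simp [Pi.sub_apply])
      set X : Ω → ℝ := fun ω => f (m + 1) ω + g (m + 1) ω - g m ω with hX
      have hXint : Integrable X P := ((hfint (m + 1)).add (hgint (m + 1))).sub (hgint m)
      have hXnn : ∀ ω, 0 ≤ X ω := fun ω => by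
        have := hfa (m + 1) ω; have := hgmono m ω; simp only [hX]; linarith
      have hξeq : (fun ω => (f (m + 1) ω + g (m + 1) ω - g m ω) / f m ω)
          = fun ω => (f m ω)⁻¹ * X ω := by
        funext ω; rw [div_eq_inv_mul]
      have hξmeas : AEStronglyMeasurable
          (fun ω => (f (m + 1) ω + g (m + 1) ω - g m ω) / f m ω) P := by
        exact ((((hfadp (m + 1)).measurable.mono (ℱ.le (m + 1)) le_rfl).add
          ((hgadp (m + 1)).mono (ℱ.le (m + 1)) le_rfl) |>.sub
          ((hgadp m).mono (ℱ.le m) le_rfl)).div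
          ((hfadp m).measurable.mono (ℱ.le m) le_rfl)).stronglyMeasurable.aestronglyMeasurable
      have hsumnn : ∀ ω, (0 : ℝ) ≤ f (m + 1) ω + g (m + 1) ω := fun ω => by
        have := hfa (m + 1) ω; have := hg0 (m + 1) ω; linarith
      have hξint : Integrable (fun ω => (f (m + 1) ω + g (m + 1) ω - g m ω) / f m ω) P := by
        refine Integrable.mono (((hfint (m + 1)).add (hgint (m + 1))).const_mul a⁻¹) hξmeas
          (Eventually.of_forall fun ω => ?_)
        have hnum : 0 ≤ f (m + 1) ω + g (m + 1) ω - g m ω := hXnn ω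
        have hnum2 : f (m + 1) ω + g (m + 1) ω - g m ω ≤ f (m + 1) ω + g (m + 1) ω := by
          have := hg0 m ω; linarith
        have h3 : (0 : ℝ) ≤ a⁻¹ * (f (m + 1) ω + g (m + 1) ω) :=
          mul_nonneg (inv_nonneg.2 ha.le) (hsumnn ω)
        simp only [Pi.add_apply]
        rw [Real.norm_eq_abs, Real.norm_eq_abs,
          abs_of_nonneg (div_nonneg hnum (hfpos m ω).le), abs_of_nonneg h3, ← div_eq_inv_mul]
        exact div_le_div₀ (hsumnn ω) hnum2 ha (hfa m ω)
      show Integrable (fun ω => (f (m + 1) ω + g (m + 1) ω - g m ω) / f m ω) P ∧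
        P[fun ω => (f (m + 1) ω + g (m + 1) ω - g m ω) / f m ω|ℱ m] =ᵐ[P] fun _ => (1 : ℝ)
      refine ⟨hξint, ?_⟩
      have hF : StronglyMeasurable[ℱ m] (fun ω => (f m ω)⁻¹) :=
        ((hfadp m).measurable.inv).stronglyMeasurable
      have hmul : Integrable (fun ω => (f m ω)⁻¹ * X ω) P := by rw [← hξeq]; exact hξint
      have h2 : P[fun ω => (f m ω)⁻¹ * X ω|ℱ m]
          =ᵐ[P] fun ω => (f m ω)⁻¹ * (P[X|ℱ m]) ω := by
        exact condExp_mul_of_stronglyMeasurable_left (μ := P) hF (by exact hmul) hXint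
      have hXce : P[X|ℱ m] =ᵐ[P] f m := by
        have hsub : P[X|ℱ m] =ᵐ[P]
            P[fun ω => f (m + 1) ω + g (m + 1) ω|ℱ m] - P[g m|ℱ m] := by
          exact condExp_sub (μ := P) (hfgint (m + 1)) (hgint m) (ℱ m)
        have hmart := (hgmart P hP).condExp_ae_eq (Nat.le_succ m)
        have hgm : P[g m|ℱ m] = g m :=
          condExp_of_stronglyMeasurable (ℱ.le m) (hgadp m).stronglyMeasurable (hgint m)
        filter_upwards [hsub, hmart] with ω h1 h2'
        rw [h1, Pi.sub_apply, hgm]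
        have : (P[fun ω => f (m + 1) ω + g (m + 1) ω|ℱ m]) ω = f m ω + g m ω := h2'
        rw [this]; ring
      calc P[fun ω => (f (m + 1) ω + g (m + 1) ω - g m ω) / f m ω|ℱ m]
          = P[fun ω => (f m ω)⁻¹ * X ω|ℱ m] := by rw [hξeq]
        _ =ᵐ[P] fun ω => (f m ω)⁻¹ * (P[X|ℱ m]) ω := h2
        _ =ᵐ[P] fun _ => (1 : ℝ) := by
            filter_upwards [hXce] with ω hω
            rw [hω]
            exact inv_mul_cancel₀ (hfpos m ω).ne'
    · intro P hP m
      refine Eventually.of_forall fun ω => ?_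
      show f (m + 1) ω / f m ω ≤ (f (m + 1) ω + g (m + 1) ω - g m ω) / f m ω
      have h1 : f (m + 1) ω ≤ f (m + 1) ω + g (m + 1) ω - g m ω := by
        have := hgmono m ω; linarith
      exact (div_le_div_iff_of_pos_right (hfpos m ω)).2 h1
  · rintro ⟨ξ, hξm, hξnn, hξc, hξle⟩
    set D : ℕ → Ω → ℝ := fun k ω => max (f k ω * ξ (k + 1) ω - f (k + 1) ω) 0 with hD
    have hDnn : ∀ k ω, 0 ≤ D k ω := fun k ω => le_max_right _ _
    have hDmeas : ∀ k, StronglyMeasurable[ℱ (k + 1)] (D k) := fun k =>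
      (((((hfadp k).measurable.mono (ℱ.mono (Nat.le_succ k)) le_rfl).mul
        (hξm (k + 1)).measurable).sub (hfadp (k + 1)).measurable).max
        measurable_const).stronglyMeasurable
    have hgSM : ∀ m, StronglyMeasurable[ℱ m] (fun ω => ∑ k ∈ Finset.range m, D k ω) := by
      intro m
      have h := Finset.stronglyMeasurable_sum (Finset.range m) fun k hk =>
        (hDmeas k).mono (ℱ.mono (Finset.mem_range.1 hk))
      have he : (∑ i ∈ Finset.range m, D i) = fun ω => ∑ k ∈ Finset.range m, D k ω := by
        funext ω; simp [Finset.sum_apply]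
      rwa [he] at h
    refine ⟨fun m ω => ∑ k ∈ Finset.range m, D k ω, fun m => (hgSM m).measurable, ?_, ?_, ?_, ?_, ?_⟩
    · intro m ω; exact Finset.sum_nonneg fun k _ => hDnn k ω
    · intro ω; simp
    · intro m ω
      show ∑ k ∈ Finset.range m, D k ω ≤ ∑ k ∈ Finset.range (m + 1), D k ω
      rw [Finset.sum_range_succ]; exact le_add_of_nonneg_right (hDnn m ω)
    · intro m
      obtain ⟨C, hC⟩ := hbdd 0
      refine ⟨C, fun P hP => ?_⟩
      haveI := hprob P hP
      have hfint : ∀ k, Integrable (f k) P := fun k => (hsm P hP).integrable k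
      have key : ∀ k, Integrable (fun ω => f k ω * ξ (k + 1) ω) P ∧
          ∫ ω, f k ω * ξ (k + 1) ω ∂P = ∫ ω, f k ω ∂P := fun k =>
        mul_cond_one (ℱ.le k) (hfadp k) (fun ω => (hfpos k ω).le) (hfint k)
          (fun ω => hξnn _ ω) (hξc P hP k).1 (hξc P hP k).2
      have hDae : ∀ k, D k =ᵐ[P] fun ω => f k ω * ξ (k + 1) ω - f (k + 1) ω := fun k => by
        filter_upwards [hξle P hP k] with ω hω
        have h2 : f (k + 1) ω ≤ f k ω * ξ (k + 1) ω := by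
          have := (div_le_iff₀ (hfpos k ω)).1 hω
          nlinarith [this]
        exact max_eq_left (by linarith)
      have hDint : ∀ k, Integrable (D k) P := fun k =>
        ((key k).1.sub (hfint (k + 1))).mono
          ((hDmeas k).mono (ℱ.le (k + 1))).aestronglyMeasurable
          (Eventually.of_forall fun ω => by
            rw [Real.norm_eq_abs, Real.norm_eq_abs, abs_of_nonneg (hDnn k ω)]
            exact max_le (le_abs_self _) (abs_nonneg _))
      have hDint_eq : ∀ k, ∫ ω, D k ω ∂P = ∫ ω, f k ω ∂P - ∫ ω, f (k + 1) ω ∂P := fun k => by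
        rw [integral_congr_ae (hDae k), integral_sub (key k).1 (hfint (k + 1)), (key k).2]
      calc ∫ ω, ∑ k ∈ Finset.range m, D k ω ∂P = ∑ k ∈ Finset.range m, ∫ ω, D k ω ∂P :=
            integral_finset_sum _ fun k _ => hDint k
        _ = ∫ ω, f 0 ω ∂P - ∫ ω, f m ω ∂P :=
            (Finset.sum_congr rfl fun k _ => hDint_eq k).trans
              (Finset.sum_range_sub' (fun k => ∫ ω, f k ω ∂P) m)
        _ ≤ C := by
            have h1 : 0 ≤ ∫ ω, f m ω ∂P := integral_nonneg fun ω => (hfpos m ω).le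
            have h2 : ∫ ω, f 0 ω ∂P ≤ ∫ ω, |f 0 ω| ∂P :=
              integral_mono (hfint 0) (hfint 0).abs fun ω => le_abs_self _
            linarith [hC P hP]
    · intro P hP
      haveI := hprob P hP
      have hfint : ∀ k, Integrable (f k) P := fun k => (hsm P hP).integrable k
      have key : ∀ k, Integrable (fun ω => f k ω * ξ (k + 1) ω) P ∧
          ∫ ω, f k ω * ξ (k + 1) ω ∂P = ∫ ω, f k ω ∂P := fun k =>
        mul_cond_one (ℱ.le k) (hfadp k) (fun ω => (hfpos k ω).le) (hfint k)
          (fun ω => hξnn _ ω) (hξc P hP k).1 (hξc P hP k).2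
      have hDae : ∀ k, D k =ᵐ[P] fun ω => f k ω * ξ (k + 1) ω - f (k + 1) ω := fun k => by
        filter_upwards [hξle P hP k] with ω hω
        have h2 : f (k + 1) ω ≤ f k ω * ξ (k + 1) ω := by
          have := (div_le_iff₀ (hfpos k ω)).1 hω
          nlinarith [this]
        exact max_eq_left (by linarith)
      have hDint : ∀ k, Integrable (D k) P := fun k =>
        ((key k).1.sub (hfint (k + 1))).mono
          ((hDmeas k).mono (ℱ.le (k + 1))).aestronglyMeasurable
          (Eventually.of_forall fun ω => by
            rw [Real.norm_eq_abs, Real.norm_eq_abs, abs_of_nonneg (hDnn k ω)]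
            exact max_le (le_abs_self _) (abs_nonneg _))
      have hgmint : ∀ m, Integrable (fun ω => ∑ k ∈ Finset.range m, D k ω) P := fun m =>
        integrable_finset_sum _ fun k _ => hDint k
      refine martingale_nat (fun m => (hfadp m).add (hgSM m)) (fun m => (hfint m).add (hgmint m))
        fun m => ?_
      have hcongr : (fun ω => f (m + 1) ω + ∑ k ∈ Finset.range (m + 1), D k ω)
          =ᵐ[P] fun ω => f m ω * ξ (m + 1) ω + ∑ k ∈ Finset.range m, D k ω := by
        filter_upwards [hDae m] with ω hω
        rw [Finset.sum_range_succ, hω]; ring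
      have e1 : P[fun ω => f (m + 1) ω + ∑ k ∈ Finset.range (m + 1), D k ω|ℱ m]
          =ᵐ[P] P[fun ω => f m ω * ξ (m + 1) ω + ∑ k ∈ Finset.range m, D k ω|ℱ m] :=
        condExp_congr_ae hcongr
      have e2 : P[fun ω => f m ω * ξ (m + 1) ω + ∑ k ∈ Finset.range m, D k ω|ℱ m]
          =ᵐ[P] P[fun ω => f m ω * ξ (m + 1) ω|ℱ m]
            + P[fun ω => ∑ k ∈ Finset.range m, D k ω|ℱ m] := by
        exact condExp_add (μ := P) (key m).1 (hgmint m) (ℱ m)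
      have e3 : P[fun ω => f m ω * ξ (m + 1) ω|ℱ m] =ᵐ[P] fun ω => f m ω * (P[ξ (m + 1)|ℱ m]) ω := by
        exact condExp_mul_of_stronglyMeasurable_left (μ := P) (hfadp m) (by exact (key m).1)
          (hξc P hP m).1
      have e4 : P[fun ω => ∑ k ∈ Finset.range m, D k ω|ℱ m]
          = fun ω => ∑ k ∈ Finset.range m, D k ω :=
        condExp_of_stronglyMeasurable (ℱ.le m) (hgSM m) (hgmint m)
      have hstep : P[fun ω => f (m + 1) ω + ∑ k ∈ Finset.range (m + 1), D k ω|ℱ m]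
          =ᵐ[P] fun ω => f m ω + ∑ k ∈ Finset.range m, D k ω := by
        refine (e1.trans e2).trans ?_
        filter_upwards [e3, (hξc P hP m).2] with ω h3 h1
        rw [Pi.add_apply, e4, h3, h1]
        simp
      exact hstep.symm
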